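/- Let n ≥ 1 be a natural number and L, U > 0 be real numbers. For natural numbers a, b, m define h(a, b, m) := (a+1)/((n+1)·L) − (b·m)/((m+1)·(n+1)·U). Let a, a', b, b', m, m' be natural numbers with b ≤ m ≤ n, b' ≤ m' ≤ n, and |a − a'| ≤ 1, |b − b'| ≤ 1, |m − m'| ≤ 1 (differences taken in the integers). Then |h(a, b, m) − h(a', b', m')| ≤ (1/n)·(1/L + 1/U). -/

import Mathlib

set_option maxHeartbeats 1000000


/-- Sensitivity bound for the per-client summand of the enhanced-privacy coverage-gap
protocol in FedCF: changing one data point (so each of `a`, `b`, `m` changes by at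
most 1) changes the transmitted quantity `h` by at most `(1/n)·(1/L + 1/U)`. -/
theorem fedcf_sensitivity_bound (n : ℕ) (hn : 1 ≤ n) (L U : ℝ)
    (hL : 0 < L) (hU : 0 < U)
    (h : ℕ → ℕ → ℕ → ℝ)
    (hdef : ∀ a b m : ℕ, h a b m
        = ((a : ℝ) + 1) / (((n : ℝ) + 1) * L)
          - ((b : ℝ) * (m : ℝ)) / (((m : ℝ) + 1) * ((n : ℝ) + 1) * U))
    (a a' b b' m m' : ℕ)
    (hbm : b ≤ m) (hmn : m ≤ n) (hbm' : b' ≤ m') (hmn' : m' ≤ n)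
    (ha : |(a : ℤ) - (a' : ℤ)| ≤ 1)
    (hb : |(b : ℤ) - (b' : ℤ)| ≤ 1)
    (hmm : |(m : ℤ) - (m' : ℤ)| ≤ 1) :
    |h a b m - h a' b' m'| ≤ (1 / (n : ℝ)) * (1 / L + 1 / U) := by
  have hn1 : (1:ℝ) ≤ (n:ℝ) := by exact_mod_cast hn
  have hnpos : (0:ℝ) < (n:ℝ) := by linarith
  have hn1pos : (0:ℝ) < (n:ℝ) + 1 := by linarith
  have hmpos : (0:ℝ) < (m:ℝ) + 1 := by positivity
  have hmpos' : (0:ℝ) < (m':ℝ) + 1 := by positivity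
  have haR : |(a:ℝ) - (a':ℝ)| ≤ 1 := by exact_mod_cast ha
  have hbR : |(b:ℝ) - (b':ℝ)| ≤ 1 := by exact_mod_cast hb
  have hmR : |(m:ℝ) - (m':ℝ)| ≤ 1 := by exact_mod_cast hmm
  have hbmR : (b:ℝ) ≤ (m:ℝ) := by exact_mod_cast hbm
  have hbmR' : (b':ℝ) ≤ (m':ℝ) := by exact_mod_cast hbm'
  have hmnR : (m:ℝ) ≤ (n:ℝ) := by exact_mod_cast hmn
  have hmnR' : (m':ℝ) ≤ (n:ℝ) := by exact_mod_cast hmn'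
  have hb0 : (0:ℝ) ≤ (b:ℝ) := Nat.cast_nonneg b
  have hb0' : (0:ℝ) ≤ (b':ℝ) := Nat.cast_nonneg b'
  rw [hdef, hdef]
  set f : ℝ := (b:ℝ) * (m:ℝ) / ((m:ℝ) + 1) with hf_def
  set f' : ℝ := (b':ℝ) * (m':ℝ) / ((m':ℝ) + 1) with hf'_def
  have hfbound : |f - f'| ≤ 1 := by
    rw [abs_le] at hbR hmR ⊢
    have hdiff : f - f' = ((b:ℝ)*(m:ℝ)*((m':ℝ)+1) - (b':ℝ)*(m':ℝ)*((m:ℝ)+1))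
        / (((m:ℝ)+1) * ((m':ℝ)+1)) := by
      rw [hf_def, hf'_def]
      field_simp
    rw [hdiff]
    constructor
    · rw [le_div_iff₀ (mul_pos hmpos hmpos')]
      nlinarith [mul_nonneg (by linarith [hbR.1] : (0:ℝ) ≤ 1 - ((b':ℝ) - (b:ℝ)))
          (mul_nonneg (Nat.cast_nonneg m) hmpos'.le),
        mul_nonneg hb0' (by linarith [hmR.1] : (0:ℝ) ≤ 1 - ((m':ℝ) - (m:ℝ)))]
    · rw [div_le_one (mul_pos hmpos hmpos')]
      nlinarith [mul_nonneg (by linarith [hbR.2] : (0:ℝ) ≤ 1 - ((b:ℝ) - (b':ℝ)))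
          (mul_nonneg (Nat.cast_nonneg m') hmpos.le),
        mul_nonneg hb0 (by linarith [hmR.2] : (0:ℝ) ≤ 1 - ((m:ℝ) - (m':ℝ)))]
  have e1 : ((b:ℝ) * (m:ℝ)) / (((m:ℝ) + 1) * ((n:ℝ) + 1) * U)
      = f / (((n:ℝ) + 1) * U) := by
    rw [hf_def]; field_simp
  have e2 : ((b':ℝ) * (m':ℝ)) / (((m':ℝ) + 1) * ((n:ℝ) + 1) * U)
      = f' / (((n:ℝ) + 1) * U) := by
    rw [hf'_def]; field_simp
  rw [e1, e2]
  have key : (((a:ℝ) + 1) / (((n:ℝ) + 1) * L) - f / (((n:ℝ) + 1) * U))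
      - (((a':ℝ) + 1) / (((n:ℝ) + 1) * L) - f' / (((n:ℝ) + 1) * U))
      = ((a:ℝ) - (a':ℝ)) / (((n:ℝ) + 1) * L) - (f - f') / (((n:ℝ) + 1) * U) := by
    field_simp
    ring
  rw [key]
  have hLn : (0:ℝ) < ((n:ℝ)+1) * L := by positivity
  have hUn : (0:ℝ) < ((n:ℝ)+1) * U := by positivity
  calc |((a:ℝ) - (a':ℝ)) / (((n:ℝ) + 1) * L) - (f - f') / (((n:ℝ) + 1) * U)|
      ≤ |((a:ℝ) - (a':ℝ)) / (((n:ℝ) + 1) * L)| + |(f - f') / (((n:ℝ) + 1) * U)| :=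
        abs_sub _ _
    _ = |(a:ℝ) - (a':ℝ)| / (((n:ℝ) + 1) * L) + |f - f'| / (((n:ℝ) + 1) * U) := by
        rw [abs_div, abs_div, abs_of_pos hLn, abs_of_pos hUn]
    _ ≤ 1 / (((n:ℝ) + 1) * L) + 1 / (((n:ℝ) + 1) * U) :=
        add_le_add ((div_le_div_iff_of_pos_right hLn).mpr haR) ((div_le_div_iff_of_pos_right hUn).mpr hfbound)
    _ ≤ (1 / (n : ℝ)) * (1 / L + 1 / U) := by
        rw [mul_add]
        have h1 : 1 / (((n:ℝ) + 1) * L) ≤ 1 / (n:ℝ) * (1 / L) := by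
          rw [div_mul_div_comm, one_mul]
          apply one_div_le_one_div_of_le (mul_pos hnpos hL)
          nlinarith
        have h2 : 1 / (((n:ℝ) + 1) * U) ≤ 1 / (n:ℝ) * (1 / U) := by
          rw [div_mul_div_comm, one_mul]
          apply one_div_le_one_div_of_le (mul_pos hnpos hU)
          nlinarith
        linarith
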